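/- arXiv:2503.10830 — 7 statements merged into one kernel-verified Lean document; each statement's English description precedes it below -/
import Mathlib

section
/- Let k ≥ 2. Consider the graph G on 2k+1 vertices consisting of k 'guard' vertices forming a clique, k+1 'standard' vertices forming an independent set, and all edges between guards and standards. With binary utilities (utility 1 for each friend in the same part), every balanced partition of the vertices into k parts (parts of sizes differing by at most one) contains some agent whose utility is strictly less than its maximin share, where the maximin share of an agent a is the maximum over all balanced k-partitions of the minimum over parts of the number of friends of a in that part. -/
open Finset

variable {V : Type*} [Fintype V] [DecidableEq V]

/-- The `i`-th part of the `k`-partition given by `π`. -/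
def cell {k : ℕ} (π : V → Fin k) (i : Fin k) : Finset V :=
  Finset.univ.filter fun v => π v = i

/-- A `k`-partition is balanced if every part has size `⌊n/k⌋` or `⌈n/k⌉`. -/
def IsBalanced {k : ℕ} (π : V → Fin k) : Prop :=
  ∀ i : Fin k, Fintype.card V / k ≤ (cell π i).card ∧
    (cell π i).card ≤ (Fintype.card V + k - 1) / k

/-- Binary utility: the number of friends (neighbors) of `a` in `S`. -/
def butil (G : SimpleGraph V) [DecidableRel G.Adj] (a : V) (S : Finset V) : ℕ :=
  (S.filter fun b => G.Adj a b).card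

/-- The maximin share of agent `a`: the largest `m` such that some balanced
`k`-partition gives `a` at least `m` friends in every part. -/
noncomputable def mmsShare (G : SimpleGraph V) [DecidableRel G.Adj] (k : ℕ) (a : V) : ℕ :=
  sSup {m : ℕ | ∃ π : V → Fin k, IsBalanced π ∧ ∀ i : Fin k, m ≤ butil G a (cell π i)}

/-- Guards are the first `k` vertices (forming a clique); standards are the remaining
`k+1` vertices (an independent set); every guard is adjacent to every standard. -/
def guardGraph (k : ℕ) : SimpleGraph (Fin (2 * k + 1)) where
  Adj u v := u ≠ v ∧ (u.val < k ∨ v.val < k)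
  symm := ⟨fun u v h => ⟨h.1.symm, h.2.symm⟩⟩
  loopless := ⟨fun u h => h.1 rfl⟩

instance (k : ℕ) : DecidableRel (guardGraph k).Adj :=
  fun u v => inferInstanceAs (Decidable (u ≠ v ∧ (u.val < k ∨ v.val < k)))

/-! ### Auxiliary material -/

lemma mem_cell {k : ℕ} (π : V → Fin k) (i : Fin k) (v : V) :
    v ∈ cell π i ↔ π v = i := by simp [cell]

/-- The base balanced partition: guard `j` goes to part `j`, standard `k + j` goes to
part `j`, and the last standard `2k` goes to part `0`. -/
def basePart (k : ℕ) (hk : 0 < k) : Fin (2 * k + 1) → Fin k := fun v =>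
  if h : v.val < k then ⟨v.val, h⟩
  else if h2 : v.val < 2 * k then ⟨v.val - k, by omega⟩
  else ⟨0, hk⟩

lemma cell_basePart (k : ℕ) (hk : 0 < k) (i : Fin k) :
    cell (basePart k hk) i =
      if i.val = 0 then
        ({⟨0, by omega⟩, ⟨k, by omega⟩, ⟨2 * k, by omega⟩} : Finset (Fin (2 * k + 1)))
      else ({⟨i.val, by omega⟩, ⟨k + i.val, by have := i.isLt; omega⟩} :
        Finset (Fin (2 * k + 1))) := by
  have hi := i.isLt
  ext v
  rw [mem_cell]
  unfold basePart
  split_ifs with h1 h2 h3 <;>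
    simp only [Finset.mem_insert, Finset.mem_singleton, Fin.ext_iff, Fin.val_mk] <;> omega

lemma card_cell_basePart (k : ℕ) (hk : 0 < k) (i : Fin k) :
    (cell (basePart k hk) i).card = if i.val = 0 then 3 else 2 := by
  have hi := i.isLt
  rw [cell_basePart]
  split_ifs with h
  · rw [Finset.card_insert_of_notMem (by simp [Fin.ext_iff]; omega),
      Finset.card_insert_of_notMem (by simp [Fin.ext_iff]; omega),
      Finset.card_singleton]
  · rw [Finset.card_insert_of_notMem (by simp [Fin.ext_iff]; omega),
      Finset.card_singleton]

lemma div_low (k : ℕ) (hk : 2 ≤ k) : (2 * k + 1) / k = 2 :=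
  Nat.div_eq_of_lt_le (by omega) (by omega)

lemma div_high (k : ℕ) (hk : 2 ≤ k) : (2 * k + 1 + k - 1) / k = 3 := by
  have : 2 * k + 1 + k - 1 = 3 * k := by omega
  rw [this, Nat.mul_div_cancel _ (by omega)]

lemma balanced_iff (k : ℕ) (hk : 2 ≤ k) (π : Fin (2 * k + 1) → Fin k) :
    IsBalanced π ↔ ∀ i : Fin k, 2 ≤ (cell π i).card ∧ (cell π i).card ≤ 3 := by
  unfold IsBalanced
  rw [Fintype.card_fin, div_low k hk, div_high k hk]

lemma balanced_basePart (k : ℕ) (hk : 2 ≤ k) : IsBalanced (basePart k (by omega)) := by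
  rw [balanced_iff k hk]
  intro i
  rw [card_cell_basePart]
  split_ifs <;> omega

lemma bddAbove_mmsSet (k : ℕ) (hk : 2 ≤ k) (a : Fin (2 * k + 1)) :
    BddAbove {m : ℕ | ∃ π : Fin (2 * k + 1) → Fin k, IsBalanced π ∧
      ∀ i : Fin k, m ≤ butil (guardGraph k) a (cell π i)} := by
  refine ⟨2 * k + 1, fun m hm => ?_⟩
  obtain ⟨π', _, h⟩ := hm
  calc m ≤ butil (guardGraph k) a (cell π' ⟨0, by omega⟩) := h _
    _ ≤ (cell π' ⟨0, by omega⟩).card := Finset.card_filter_le _ _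
    _ ≤ Fintype.card (Fin (2 * k + 1)) := Finset.card_le_univ _
    _ = 2 * k + 1 := by simp

lemma mms_standard (k : ℕ) (hk : 2 ≤ k) (a : Fin (2 * k + 1)) (ha : k ≤ a.val) :
    1 ≤ mmsShare (guardGraph k) k a := by
  apply le_csSup (bddAbove_mmsSet k hk a)
  refine ⟨basePart k (by omega), balanced_basePart k hk, fun i => ?_⟩
  have hi := i.isLt
  rw [butil]
  refine Finset.card_pos.mpr ⟨⟨i.val, by omega⟩, ?_⟩
  rw [Finset.mem_filter, mem_cell]
  refine ⟨?_, ?_, Or.inr (by simpa using hi)⟩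
  · unfold basePart
    rw [dif_pos (by simpa using hi)]
  · intro h
    have := congrArg Fin.val h
    simp at this
    omega

lemma cell_comp_equiv {k : ℕ} (π : V → Fin k) (e : V ≃ V) (i : Fin k) :
    cell (π ∘ e) i = (cell π i).map e.symm.toEmbedding := by
  ext v
  simp [cell, Finset.mem_map_equiv]

lemma butil_guard (k : ℕ) (g : Fin (2 * k + 1)) (hg : g.val < k)
    (S : Finset (Fin (2 * k + 1))) :
    butil (guardGraph k) g S = (S.erase g).card := by
  unfold butil
  congr 1
  ext b
  rw [Finset.mem_filter, Finset.mem_erase]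
  show b ∈ S ∧ (g ≠ b ∧ (g.val < k ∨ b.val < k)) ↔ b ≠ g ∧ b ∈ S
  constructor
  · rintro ⟨hb, hne, -⟩
    exact ⟨hne.symm, hb⟩
  · rintro ⟨hne, hb⟩
    exact ⟨hb, hne.symm, Or.inl hg⟩

lemma mms_guard (k : ℕ) (hk : 2 ≤ k) (g : Fin (2 * k + 1)) (hg : g.val < k) :
    2 ≤ mmsShare (guardGraph k) k g := by
  apply le_csSup (bddAbove_mmsSet k hk g)
  refine ⟨basePart k (by omega) ∘ Equiv.swap ⟨0, by omega⟩ g, ?_, ?_⟩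
  · rw [balanced_iff k hk]
    intro i
    rw [cell_comp_equiv, Finset.card_map, card_cell_basePart]
    split_ifs <;> omega
  · intro i
    rw [butil_guard k g hg]
    have hcard : (cell (basePart k (by omega) ∘ Equiv.swap ⟨0, by omega⟩ g) i).card =
        if i.val = 0 then 3 else 2 := by
      rw [cell_comp_equiv, Finset.card_map, card_cell_basePart]
    have hbase0 : basePart k (by omega) (⟨0, by omega⟩ : Fin (2 * k + 1)) =
        (⟨0, by omega⟩ : Fin k) := by
      unfold basePart
      rw [dif_pos (show ((⟨0, by omega⟩ : Fin (2 * k + 1))).val < k from by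
        show (0 : ℕ) < k; omega)]
    have hmem : g ∈ cell (basePart k (by omega) ∘ Equiv.swap ⟨0, by omega⟩ g) i ↔
        i.val = 0 := by
      rw [mem_cell, Function.comp_apply, Equiv.swap_apply_right, hbase0, Fin.ext_iff]
      exact eq_comm
    by_cases h0 : i.val = 0
    · rw [Finset.card_erase_of_mem (hmem.mpr h0), hcard, if_pos h0]
    · rw [Finset.erase_eq_of_notMem (fun hm => h0 (hmem.mp hm)), hcard, if_neg h0]

/-- In the guards/standards instance, no balanced `k`-partition is MMS: some agent
receives strictly less than its maximin share. -/
theorem stmt0 (k : ℕ) (hk : 2 ≤ k) (π : Fin (2 * k + 1) → Fin k) (hπ : IsBalanced π) :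
    ∃ a : Fin (2 * k + 1),
      butil (guardGraph k) a (cell π (π a)) < mmsShare (guardGraph k) k a := by
  have hb := (balanced_iff k hk π).mp hπ
  have hsum : ∑ i : Fin k, (cell π i).card = 2 * k + 1 := by
    have H := Finset.card_eq_sum_card_fiberwise
      (f := π) (s := (univ : Finset (Fin (2 * k + 1)))) (t := univ) (fun x _ => mem_univ _)
    simp only [cell]
    rw [← H, card_univ, Fintype.card_fin]
  by_cases hsurj : Function.Surjective (fun j : Fin k => π (Fin.castLE (by omega) j))
  · -- every part has a guard; pick a part of size 2, its guard gets at most 1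
    have h2 : ∃ i, (cell π i).card = 2 := by
      by_contra hno
      push_neg at hno
      have h3 : ∀ i, (cell π i).card = 3 := fun i => by
        have h1 := hb i; have h4 := hno i; omega
      have : ∑ i : Fin k, (cell π i).card = 3 * k := by
        rw [Finset.sum_congr rfl fun i _ => h3 i, Finset.sum_const, Finset.card_univ,
          Fintype.card_fin, smul_eq_mul, mul_comm]
      omega
    obtain ⟨i2, hi2⟩ := h2
    obtain ⟨j, hj⟩ := hsurj i2
    simp only at hj
    set g : Fin (2 * k + 1) := Fin.castLE (by omega) j with hgdef
    have hgk : g.val < k := by simpa [hgdef] using j.isLt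
    refine ⟨g, lt_of_le_of_lt ?_ (lt_of_lt_of_le one_lt_two (mms_guard k hk g hgk))⟩
    rw [hj]
    have hsub : (cell π i2).filter (fun b => (guardGraph k).Adj g b) ⊆ (cell π i2).erase g := by
      intro b hbm
      rw [Finset.mem_filter] at hbm
      exact Finset.mem_erase.mpr ⟨hbm.2.1.symm, hbm.1⟩
    calc butil (guardGraph k) g (cell π i2) ≤ ((cell π i2).erase g).card :=
          Finset.card_le_card hsub
      _ = 1 := by rw [Finset.card_erase_of_mem (by rw [mem_cell]; exact hj), hi2]
  · -- some part has no guard; any standard there gets 0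
    obtain ⟨i, hi⟩ : ∃ i : Fin k, ∀ j : Fin k, π (Fin.castLE (by omega) j) ≠ i := by
      by_contra hc
      push_neg at hc
      exact hsurj fun i => hc i
    have hne : (cell π i).Nonempty := Finset.card_pos.mp (by have := hb i; omega)
    obtain ⟨a, ha⟩ := hne
    have hπa : π a = i := (mem_cell π i a).mp ha
    have hstd : k ≤ a.val := by
      by_contra hlt
      push_neg at hlt
      apply hi ⟨a.val, hlt⟩
      rwa [show Fin.castLE (by omega : k ≤ 2 * k + 1) (⟨a.val, hlt⟩ : Fin k) = a from
        Fin.ext rfl]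
    refine ⟨a, ?_⟩
    have h0 : butil (guardGraph k) a (cell π (π a)) = 0 := by
      rw [hπa, butil, Finset.card_eq_zero, Finset.filter_eq_empty_iff]
      intro b hb'
      rw [mem_cell] at hb'
      rintro ⟨hne', hor⟩
      have hbk : b.val < k := by
        rcases hor with h | h
        · omega
        · exact h
      apply hi ⟨b.val, hbk⟩
      rwa [show Fin.castLE (by omega : k ≤ 2 * k + 1) (⟨b.val, hbk⟩ : Fin k) = b from
        Fin.ext rfl]
    rw [h0]
    exact lt_of_lt_of_le zero_lt_one (mms_standard k hk a hstd)
end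

section
/- Let k ≥ 2 and let G be the complete graph on 2k vertices with binary utilities. Then every balanced k-partition of G is envy-free, but no balanced k-partition of G is proportional. -/
open Finset

variable {V : Type*} [Fintype V] [DecidableEq V]

/-- Envy-freeness for binary utilities. -/
def IsEF (G : SimpleGraph V) [DecidableRel G.Adj] {k : ℕ} (π : V → Fin k) : Prop :=
  ∀ a b : V, butil G a ((cell π (π b)).erase b) ≤ butil G a (cell π (π a))

/-- Proportionality for binary utilities: `u_a(π(a)) ≥ deg(a)/k`. -/
def IsPROP (G : SimpleGraph V) [DecidableRel G.Adj] {k : ℕ} (π : V → Fin k) : Prop :=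
  ∀ a : V, G.degree a ≤ k * butil G a (cell π (π a))

/-- On the complete graph with `2k` vertices, every balanced `k`-partition is
envy-free but no balanced `k`-partition is proportional. -/
theorem stmt2 (k : ℕ) (hk : 2 ≤ k) (π : Fin (2 * k) → Fin k) (hπ : IsBalanced π) :
    IsEF (⊤ : SimpleGraph (Fin (2 * k))) π ∧
      ¬ IsPROP (⊤ : SimpleGraph (Fin (2 * k))) π := by
  have hk0 : 0 < k := by omega
  have hcell : ∀ i, (cell π i).card = 2 := by
    intro i
    have h := hπ i
    rw [Fintype.card_fin] at h
    have h1 : 2 * k / k = 2 := Nat.mul_div_cancel _ hk0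
    have h2 : (2 * k + k - 1) / k = 2 := by
      apply Nat.div_eq_of_lt_le <;> omega
    omega
  have hmem : ∀ a : Fin (2 * k), a ∈ cell π (π a) := fun a => by simp [cell]
  have hbutil_self : ∀ a, butil ⊤ a (cell π (π a)) = 1 := by
    intro a
    have heq : (cell π (π a)).filter (fun b => (⊤ : SimpleGraph _).Adj a b)
        = (cell π (π a)).erase a := by
      ext x
      simp only [Finset.mem_filter, Finset.mem_erase, SimpleGraph.top_adj]
      tauto
    rw [butil, heq, Finset.card_erase_of_mem (hmem a), hcell]
  constructor
  · intro a b
    rw [hbutil_self]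
    calc butil ⊤ a ((cell π (π b)).erase b)
        ≤ ((cell π (π b)).erase b).card := Finset.card_filter_le _ _
      _ = 1 := by rw [Finset.card_erase_of_mem (hmem b), hcell]
  · intro h
    have h0 := h ⟨0, by omega⟩
    rw [hbutil_self] at h0
    have hdeg : (⊤ : SimpleGraph (Fin (2 * k))).degree ⟨0, by omega⟩ = 2 * k - 1 := by
      rw [SimpleGraph.degree, SimpleGraph.neighborFinset_eq_filter]
      rw [show (Finset.univ.filter fun b => (⊤ : SimpleGraph (Fin (2*k))).Adj ⟨0, by omega⟩ b)
          = Finset.univ.erase ⟨0, by omega⟩ from by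
        ext x
        simp only [Finset.mem_filter, Finset.mem_erase, SimpleGraph.top_adj, Finset.mem_univ,
          and_true, true_and]
        tauto]
      rw [Finset.card_erase_of_mem (Finset.mem_univ _), Finset.card_univ, Fintype.card_fin]
    omega
end

section
/- Let k ≥ 2 and let G be a star with center c and k leaves, with binary utilities. Then G admits no proportional balanced k-partition (since each leaf's PROP-share is 1/k > 0 but not all k leaves can be in the same part as c in a balanced partition with k+1 agents), while an MMS balanced k-partition exists. -/
open Finset

variable {V : Type*} [Fintype V] [DecidableEq V]

/-- MMS partition: every agent gets at least its maximin share. -/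
def IsMMS (G : SimpleGraph V) [DecidableRel G.Adj] {k : ℕ} (π : V → Fin k) : Prop :=
  ∀ a : V, mmsShare G k a ≤ butil G a (cell π (π a))

/-- A star with center (vertex `0`) and `k` leaves. -/
def starGraph (k : ℕ) : SimpleGraph (Fin (k + 1)) where
  Adj u v := u ≠ v ∧ (u.val = 0 ∨ v.val = 0)
  symm := ⟨fun u v h => ⟨h.1.symm, h.2.symm⟩⟩
  loopless := ⟨fun u h => h.1 rfl⟩

instance (k : ℕ) : DecidableRel (starGraph k).Adj :=
  fun u v => inferInstanceAs (Decidable (u ≠ v ∧ (u.val = 0 ∨ v.val = 0)))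

set_option linter.unusedSectionVars false in
lemma sum_cell_card {k : ℕ} (π : V → Fin k) :
    ∑ i : Fin k, (cell π i).card = Fintype.card V := by
  rw [← Finset.card_univ,
    Finset.card_eq_sum_card_fiberwise (f := π) (t := Finset.univ) (fun x _ => mem_univ _)]
  rfl


/-- The star with center and `k` leaves admits no proportional balanced `k`-partition,
but admits an MMS balanced `k`-partition. -/
theorem stmt5 (k : ℕ) (hk : 2 ≤ k) :
    (¬ ∃ π : Fin (k + 1) → Fin k, IsBalanced π ∧ IsPROP (starGraph k) π) ∧
      ∃ π : Fin (k + 1) → Fin k, IsBalanced π ∧ IsMMS (starGraph k) π := by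
  have hk0 : 0 < k := by omega
  have hb1 : Fintype.card (Fin (k+1)) / k = 1 := by
    rw [Fintype.card_fin]
    apply Nat.div_eq_of_lt_le <;> omega
  have hb2 : (Fintype.card (Fin (k+1)) + k - 1) / k = 2 := by
    rw [Fintype.card_fin]
    apply Nat.div_eq_of_lt_le <;> omega
  constructor
  · rintro ⟨π, hbal, hprop⟩
    have hall : ∀ v : Fin (k+1), π v = π 0 := by
      intro v
      by_cases hv0 : v = 0
      · rw [hv0]
      · have hadj : (starGraph k).Adj v 0 := ⟨hv0, Or.inr rfl⟩
        have hdeg : 0 < (starGraph k).degree v :=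
          SimpleGraph.degree_pos_iff_exists_adj _ _ |>.mpr ⟨0, hadj⟩
        have h := hprop v
        have hbpos : 0 < butil (starGraph k) v (cell π (π v)) := by
          rcases Nat.eq_zero_or_pos (butil (starGraph k) v (cell π (π v))) with h0 | h0
          · rw [h0] at h; omega
          · exact h0
        obtain ⟨b, hb⟩ := Finset.card_pos.mp hbpos
        simp only [butil, Finset.mem_filter] at hb
        have hb0 : b = 0 := by
          rcases hb.2 with ⟨hne, h0 | h0⟩
          · exact absurd (Fin.ext h0) hv0
          · exact Fin.ext h0
        have hmem := hb.1
        rw [hb0, cell, Finset.mem_filter] at hmem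
        exact hmem.2.symm
    have hcell : cell π (π 0) = Finset.univ := by
      ext v; simp [cell, hall v]
    have h2 := (hbal (π 0)).2
    rw [hcell, Finset.card_univ, Fintype.card_fin] at h2
    have hb2' : (k+1+k-1)/k = 2 := by apply Nat.div_eq_of_lt_le <;> omega
    rw [hb2'] at h2
    omega
  · refine ⟨fun v => ⟨v.val - 1, by have := v.isLt; omega⟩, ?_, ?_⟩
    · intro i
      rw [hb1, hb2]
      constructor
      · apply Finset.card_pos.mpr
        refine ⟨⟨i.val + 1, by omega⟩, ?_⟩
        simp only [cell, Finset.mem_filter, Finset.mem_univ, true_and]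
        exact Fin.ext (by simp)
      · have hsub : cell (fun v : Fin (k+1) => (⟨v.val - 1, by have := v.isLt; omega⟩ : Fin k)) i
            ⊆ {0, ⟨i.val + 1, by omega⟩} := by
          intro v hv
          simp only [cell, Finset.mem_filter, Finset.mem_univ, true_and] at hv
          have hv' : v.val - 1 = i.val := congrArg Fin.val hv
          have := v.isLt
          simp only [Finset.mem_insert, Finset.mem_singleton, Fin.ext_iff, Fin.val_zero]
          omega
        calc _ ≤ _ := Finset.card_le_card hsub
        _ ≤ 2 := (Finset.card_insert_le _ _).trans (by simp)
    · intro a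
      by_cases ha : a = 0
      · subst ha
        have hub : mmsShare (starGraph k) k 0 ≤ 1 := by
          apply csSup_le'
          rintro m ⟨π', hbal', hall'⟩
          have hex : ∃ i, (cell π' i).card ≤ 1 := by
            by_contra h
            push_neg at h
            have hsum := sum_cell_card π'
            have h2 : 2 * k ≤ ∑ i, (cell π' i).card := by
              calc 2 * k = ∑ _i : Fin k, 2 := by simp [mul_comm]
              _ ≤ _ := Finset.sum_le_sum (fun i _ => h i)
            rw [hsum, Fintype.card_fin] at h2
            omega
          obtain ⟨i, hi⟩ := hex
          have h1 := hall' i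
          have hle : butil (starGraph k) 0 (cell π' i) ≤ (cell π' i).card :=
            Finset.card_filter_le _ _
          omega
        have hlb : 1 ≤ butil (starGraph k) 0
            (cell (fun v : Fin (k+1) => (⟨v.val - 1, by have := v.isLt; omega⟩ : Fin k))
              ((fun v : Fin (k+1) => (⟨v.val - 1, by have := v.isLt; omega⟩ : Fin k)) 0)) := by
          apply Finset.card_pos.mpr
          refine ⟨⟨1, by omega⟩, ?_⟩
          simp only [butil, cell, Finset.mem_filter, Finset.mem_univ, true_and]
          constructor
          · exact Fin.ext (by simp)
          · exact ⟨by simp [Fin.ext_iff], Or.inl rfl⟩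
        omega
      · have hub : mmsShare (starGraph k) k a ≤ 0 := by
          apply csSup_le'
          rintro m ⟨π', hbal', hall'⟩
          obtain ⟨i, hi⟩ := Fintype.exists_ne_of_one_lt_card (by simp; omega) (π' 0)
          have h1 := hall' i
          have h0 : butil (starGraph k) a (cell π' i) = 0 := by
            simp only [butil]
            rw [Finset.card_eq_zero, Finset.filter_eq_empty_iff]
            intro b hb hadj
            have hb0 : b = 0 := by
              rcases hadj with ⟨hne, h0 | h0⟩
              · exact absurd (Fin.ext h0) ha
              · exact Fin.ext h0
            rw [hb0, cell, Finset.mem_filter] at hb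
            exact hi hb.2.symm
          omega
        omega
end

section
/- For k = 2, every MMS balanced 2-partition with additive utilities is EF1: if some agent a envied agent b even after removing any single agent from b's part, then swapping a least-valued member of a's part with a member of b's part would strictly increase a's minimum utility over both parts, contradicting that a received its maximin share. -/
open Finset

variable {V : Type*} [Fintype V] [DecidableEq V]

/-- Additive utility of agent `a` for a set `S` of agents. -/
def autil (u : V → V → ℕ) (a : V) (S : Finset V) : ℕ := ∑ b ∈ S, u a b

/-- The maximin share of agent `a` w.r.t. additive utilities `u`:
the largest `m` such that some balanced `k`-partition gives `a` utility
at least `m` in every part. -/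
noncomputable def mmsShareA (k : ℕ) (u : V → V → ℕ) (a : V) : ℕ :=
  sSup {m : ℕ | ∃ π : V → Fin k, IsBalanced π ∧ ∀ i : Fin k, m ≤ autil u a (cell π i)}

/-- For two parts, every MMS balanced 2-partition with additive utilities is EF1:
for every pair of agents `a, b` there is an agent `c` whose removal from `b`'s part
(after removing `b`) eliminates the envy of `a`. -/
theorem stmt6 (G : SimpleGraph V) [DecidableRel G.Adj] (u : V → V → ℕ)
    (hu : ∀ a b : V, 0 < u a b ↔ G.Adj a b)
    (π : V → Fin 2) (hπ : IsBalanced π)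
    (hmms : ∀ a : V, mmsShareA 2 u a ≤ autil u a (cell π (π a))) :
    ∀ a b : V, ∃ c : V,
      autil u a (((cell π (π b)).erase b).erase c) ≤ autil u a (cell π (π a)) := by
  intro a b
  by_cases hab : π b = π a
  · refine ⟨b, ?_⟩
    rw [hab]
    exact Finset.sum_le_sum_of_subset
      ((Finset.erase_subset _ _).trans (Finset.erase_subset _ _))
  · by_contra hcon
    push_neg at hcon
    set A := cell π (π a) with hA
    set B := cell π (π b) with hB
    have ha : a ∈ A := by simp [hA, cell]
    have hb : b ∈ B := by simp [hB, cell]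
    have hmemA : ∀ x ∈ A, π x = π a := by
      intro x hx; simpa [hA, cell] using hx
    have hmemB : ∀ x ∈ B, π x = π b := by
      intro x hx; simpa [hB, cell] using hx
    -- B.erase b is nonempty
    have hne : (B.erase b).Nonempty := by
      rcases Finset.eq_empty_or_nonempty (B.erase b) with h | h
      · have h0 := hcon b
        rw [Finset.erase_idem, h] at h0
        simp [autil] at h0
      · exact h
    obtain ⟨c, hc, hcmax⟩ := Finset.exists_max_image (B.erase b) (u a) hne
    obtain ⟨d, hd, hdmin⟩ := Finset.exists_min_image A (u a) ⟨a, ha⟩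
    have hcB : c ∈ B := Finset.mem_of_mem_erase hc
    have hcb : c ≠ b := Finset.ne_of_mem_erase hc
    have hπc : π c = π b := hmemB c hcB
    have hπd : π d = π a := hmemA d hd
    have hdc : d ≠ c := by
      intro h
      exact hab (by rw [← hπc, ← h, hπd])
    -- cardinality facts
    have hcardA : Fintype.card V / 2 ≤ A.card := (hπ (π a)).1
    have hcardB : B.card ≤ (Fintype.card V + 2 - 1) / 2 := (hπ (π b)).2
    have hBA : B.card ≤ A.card + 1 := by omega
    have hB2 : 2 ≤ B.card := Finset.one_lt_card.mpr ⟨b, hb, c, hcB, (hcb).symm⟩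
    -- key: u a d < u a c
    have hkey : u a d < u a c := by
      by_contra hle
      push_neg at hle
      have h1 : autil u a ((B.erase b).erase c) ≤ ((B.erase b).erase c).card * u a c := by
        have := Finset.sum_le_card_nsmul ((B.erase b).erase c) (u a) (u a c)
          (fun x hx => hcmax x (Finset.mem_of_mem_erase hx))
        simpa [autil] using this
      have hcard : ((B.erase b).erase c).card = B.card - 2 := by
        rw [Finset.card_erase_of_mem hc, Finset.card_erase_of_mem hb]
        omega
      rw [hcard] at h1
      have h2 : A.card * u a d ≤ autil u a A := by
        have := Finset.card_nsmul_le_sum A (u a) (u a d) (fun x hx => hdmin x hx)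
        simpa [autil] using this
      have h3 : (B.card - 2) * u a c ≤ A.card * u a d :=
        Nat.mul_le_mul (by omega) hle
      exact absurd (hcon c) (not_lt.mpr (le_trans h1 (le_trans h3 h2)))
    -- the swapped partition
    set π' : V → Fin 2 := fun x => if x = d then π b else if x = c then π a else π x with hπ'
    have hcellA : cell π' (π a) = insert c (A.erase d) := by
      ext x
      by_cases h1 : x = d
      · subst h1
        simp [cell, hπ', hab, Ne.symm hdc, hdc]
      · by_cases h2 : x = c
        · subst h2
          simp [cell, hπ', h1]
        · simp [cell, hπ', h1, h2, hA]
    have hcellB : cell π' (π b) = insert d (B.erase c) := by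
      ext x
      by_cases h1 : x = d
      · subst h1
        simp [cell, hπ']
      · by_cases h2 : x = c
        · subst h2
          simp [cell, hπ', h1, Ne.symm hdc]
          exact fun h => hab h.symm
        · simp [cell, hπ', h1, h2, hB]
    have hcA : c ∉ A.erase d := by
      intro h
      exact hab (by rw [← hπc, hmemA c (Finset.mem_of_mem_erase h)])
    have hdB : d ∉ B.erase c := by
      intro h
      exact hab (by rw [← hmemB d (Finset.mem_of_mem_erase h), hπd])
    have hcardA' : (insert c (A.erase d)).card = A.card := by
      rw [Finset.card_insert_of_notMem hcA, Finset.card_erase_of_mem hd]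
      have : 1 ≤ A.card := Finset.card_pos.mpr ⟨a, ha⟩
      omega
    have hcardB' : (insert d (B.erase c)).card = B.card := by
      rw [Finset.card_insert_of_notMem hdB, Finset.card_erase_of_mem hcB]
      omega
    have hcover : ∀ i : Fin 2, i = π a ∨ i = π b := by
      have h2 : ∀ j : Fin 2, j = 0 ∨ j = 1 := by decide
      intro i
      rcases h2 i with rfl | rfl <;> rcases h2 (π a) with h3 | h3 <;>
        rcases h2 (π b) with h4 | h4 <;> simp_all
    have hbal : IsBalanced π' := by
      intro i
      rcases hcover i with rfl | rfl
      · rw [hcellA, hcardA']; exact hπ (π a)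
      · rw [hcellB, hcardB']; exact hπ (π b)
    -- the candidate lower bound for the MMS share
    set m := min (autil u a (insert c (A.erase d))) (autil u a (insert d (B.erase c))) with hm
    have hbdd : BddAbove {m : ℕ | ∃ π'' : V → Fin 2, IsBalanced π'' ∧
        ∀ i : Fin 2, m ≤ autil u a (cell π'' i)} := by
      refine ⟨autil u a Finset.univ, ?_⟩
      rintro m' ⟨π'', -, hm'⟩
      exact le_trans (hm' 0) (Finset.sum_le_sum_of_subset (Finset.subset_univ _))
    have hmem : m ∈ {m : ℕ | ∃ π'' : V → Fin 2, IsBalanced π'' ∧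
        ∀ i : Fin 2, m ≤ autil u a (cell π'' i)} := by
      refine ⟨π', hbal, fun i => ?_⟩
      rcases hcover i with rfl | rfl
      · rw [hcellA]; exact min_le_left _ _
      · rw [hcellB]; exact min_le_right _ _
    have hsup : m ≤ mmsShareA 2 u a := le_csSup hbdd hmem
    -- utility computations
    have e1 : autil u a (insert c (A.erase d)) = u a c + autil u a (A.erase d) :=
      Finset.sum_insert hcA
    have e2 : u a d + autil u a (A.erase d) = autil u a A :=
      Finset.add_sum_erase A (u a) hd
    have e3 : autil u a (insert d (B.erase c)) = u a d + autil u a (B.erase c) :=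
      Finset.sum_insert hdB
    have e4 : autil u a ((B.erase b).erase c) ≤ autil u a (B.erase c) :=
      Finset.sum_le_sum_of_subset (Finset.erase_subset_erase c (Finset.erase_subset b B))
    have comp1 : autil u a A < autil u a (insert c (A.erase d)) := by omega
    have comp2 : autil u a A < autil u a (insert d (B.erase c)) := by
      have := hcon c
      omega
    have hm2 : autil u a A < m := lt_min comp1 comp2
    have h5 := hmms a
    rw [← hA] at h5
    omega
end

section
/- If G is a path on n vertices with binary utilities and ⌊n/k⌋ ≥ 2, then the balanced k-partition into k contiguous sub-paths is proportional and envy-free (each agent has at least one neighbor in its own part, and each agent has at most 2 friends, of which at most one lies in any other part). -/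
open Finset

variable {V : Type*} [Fintype V] [DecidableEq V]

/-- The path graph on `Fin n`: `u` and `v` are adjacent iff they are consecutive. -/
def pathGraph (n : ℕ) : SimpleGraph (Fin n) where
  Adj u v := u.val + 1 = v.val ∨ v.val + 1 = u.val
  symm := ⟨fun u v h => h.symm⟩
  loopless := ⟨fun u h => by rcases h with h | h <;> omega⟩

instance (n : ℕ) : DecidableRel (pathGraph n).Adj :=
  fun u v => inferInstanceAs (Decidable (u.val + 1 = v.val ∨ v.val + 1 = u.val))

/-! ### Auxiliary lemmas -/

lemma butil_mono (G : SimpleGraph V) [DecidableRel G.Adj] (a : V) {S T : Finset V}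
    (h : S ⊆ T) : butil G a S ≤ butil G a T :=
  Finset.card_le_card (Finset.filter_subset_filter _ h)

lemma ceil_le_iff {k : ℕ} (hk : 0 < k) (a x : ℕ) :
    (a + k - 1) / k ≤ x ↔ a ≤ x * k := by
  rw [Nat.div_le_iff_le_mul_add_pred hk, mul_comm x k]
  omega

/-- Boundary sequence of the contiguous balanced partition. -/
def cfun (n k i : ℕ) : ℕ := (i * n + k - 1) / k

lemma cfun_mono {n k : ℕ} {i j : ℕ} (h : i ≤ j) : cfun n k i ≤ cfun n k j := by
  have := Nat.mul_le_mul_right n h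
  exact Nat.div_le_div_right (by omega)

lemma cfun_k {n k : ℕ} (hk : 0 < k) : cfun n k k = n := by
  unfold cfun
  rw [mul_comm k n, show n * k + k - 1 = k * n + (k - 1) from by
    have : n * k = k * n := by ring
    omega]
  rw [Nat.mul_add_div hk, Nat.div_eq_of_lt (by omega)]
  omega

lemma part_mem_iff {n k : ℕ} (hn : 0 < n) (hk : 0 < k) (x i : ℕ) :
    x * k / n = i ↔ cfun n k i ≤ x ∧ x < cfun n k (i + 1) := by
  have h1 : i ≤ x * k / n ↔ i * n ≤ x * k := Nat.le_div_iff_mul_le hn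
  have h2 : x * k / n < i + 1 ↔ x * k < (i + 1) * n := Nat.div_lt_iff_lt_mul hn
  have h3 : cfun n k i ≤ x ↔ i * n ≤ x * k := ceil_le_iff hk _ _
  have h4 : cfun n k (i + 1) ≤ x ↔ (i + 1) * n ≤ x * k := ceil_le_iff hk _ _
  omega

lemma cfun_bounds {n k : ℕ} (hk : 0 < k) (i : ℕ) :
    n / k ≤ cfun n k (i + 1) - cfun n k i ∧
      cfun n k (i + 1) - cfun n k i ≤ (n + k - 1) / k := by
  obtain ⟨q, r, hr, hn⟩ : ∃ q r, r < k ∧ n = k * q + r :=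
    ⟨n / k, n % k, Nat.mod_lt _ hk, (Nat.div_add_mod n k).symm⟩
  have hq : n / k = q := by
    rw [hn, Nat.mul_add_div hk, Nat.div_eq_of_lt hr]
    omega
  have hin : (i + 1) * n = i * n + n := by ring
  unfold cfun
  have e1 : ((i + 1) * n + k - 1) / k = (i * n + r + (k - 1)) / k + q := by
    rw [show (i + 1) * n + k - 1 = (i * n + r + (k - 1)) + k * q from by omega]
    rw [Nat.add_mul_div_left _ _ hk]
  have e2 : (n + k - 1) / k = (r + (k - 1)) / k + q := by
    rw [show n + k - 1 = (r + (k - 1)) + k * q from by omega]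
    rw [Nat.add_mul_div_left _ _ hk]
  have e1' : (i * n + k - 1) = (i * n + (k - 1)) := by omega
  rw [e1', e1]
  have e3 : (i * n + (k - 1)) / k ≤ (i * n + r + (k - 1)) / k :=
    Nat.div_le_div_right (by omega)
  have e4 : (i * n + r + (k - 1)) / k ≤ (i * n + (k - 1)) / k + (r + (k - 1)) / k := by
    rcases Nat.eq_zero_or_pos r with h0 | h0
    · rw [show i * n + r + (k - 1) = i * n + (k - 1) from by omega]
      exact Nat.le_add_right _ _
    · have hr1 : (r + (k - 1)) / k = 1 := by
        have l1 : 1 ≤ (r + (k - 1)) / k := (Nat.le_div_iff_mul_le hk).mpr (by omega)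
        have l2 : (r + (k - 1)) / k < 2 := (Nat.div_lt_iff_lt_mul hk).mpr (by omega)
        omega
      rw [hr1]
      calc (i * n + r + (k - 1)) / k ≤ (i * n + (k - 1) + k) / k :=
            Nat.div_le_div_right (by omega)
        _ = (i * n + (k - 1)) / k + 1 := Nat.add_div_right _ hk
  omega

/-- The contiguous balanced partition: `x ↦ ⌊x·k/n⌋`. -/
def contigPart (n k : ℕ) (hn : 0 < n) (hk : 0 < k) (x : Fin n) : Fin k :=
  ⟨x.val * k / n, by
    refine (Nat.div_lt_iff_lt_mul hn).mpr ?_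
    have h := (Nat.mul_lt_mul_right hk).mpr x.isLt
    have h' : n * k = k * n := Nat.mul_comm n k
    omega⟩

/-- Any subset of friends of `a` in a path has at most 2 elements. -/
lemma filter_adj_le_two {n : ℕ} (a : Fin n) (S : Finset (Fin n)) :
    (S.filter fun b => (pathGraph n).Adj a b).card ≤ 2 := by
  calc (S.filter fun b => (pathGraph n).Adj a b).card
      ≤ ({a.val + 1, a.val - 1} : Finset ℕ).card := by
        apply Finset.card_le_card_of_injOn Fin.val
        · intro b hb
          simp only [Finset.mem_coe, Finset.mem_filter] at hb
          have h : a.val + 1 = b.val ∨ b.val + 1 = a.val := hb.2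
          simp only [Finset.mem_coe, Finset.mem_insert, Finset.mem_singleton]
          omega
        · intro x _ y _ h
          exact Fin.ext h
    _ ≤ 2 := by
        apply le_trans (Finset.card_insert_le _ _)
        simp

lemma deg_le_two {n : ℕ} (a : Fin n) : (pathGraph n).degree a ≤ 2 := by
  rw [SimpleGraph.degree, SimpleGraph.neighborFinset_eq_filter]
  exact filter_adj_le_two a _

/-- Each agent has at least one friend in its own (contiguous, size ≥ 2) cell. -/
lemma one_le_butil_own {n k : ℕ} (π : Fin n → Fin k) (h2 : 2 ≤ n / k)
    (hbal : IsBalanced π)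
    (hconv : ∀ x y z : Fin n, x ≤ y → y ≤ z → π x = π z → π y = π x)
    (a : Fin n) : 1 ≤ butil (pathGraph n) a (cell π (π a)) := by
  have hcard : 2 ≤ (cell π (π a)).card := by
    have := (hbal (π a)).1
    simp only [Fintype.card_fin] at this
    omega
  obtain ⟨b, hb, hba⟩ :=
    Finset.exists_mem_ne (s := cell π (π a)) (by omega) a
  have hbmem : π b = π a := by
    simpa [cell] using hb
  have hne : b.val ≠ a.val := fun h => hba (Fin.ext h)
  rcases Nat.lt_or_ge b.val a.val with hlt | hge
  · -- take c = a - 1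
    set c : Fin n := ⟨a.val - 1, by omega⟩ with hc
    have hπc : π c = π a := by
      have h1 : b ≤ c := by simp only [Fin.le_def, hc, Fin.val_mk]; omega
      have h2' : c ≤ a := by simp only [Fin.le_def, hc, Fin.val_mk]; omega
      have := hconv b c a h1 h2' hbmem
      rw [this, hbmem]
    have hadj : (pathGraph n).Adj a c := Or.inr (by
      simp only [hc, Fin.val_mk]; omega)
    have : c ∈ (cell π (π a)).filter fun x => (pathGraph n).Adj a x := by
      simp [cell, hπc, hadj]
    exact Finset.card_pos.mpr ⟨c, this⟩
  · -- take c = a + 1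
    have hlt' : a.val + 1 < n := by
      have := b.isLt
      omega
    set c : Fin n := ⟨a.val + 1, hlt'⟩ with hc
    have hπc : π c = π a := by
      have h1 : a ≤ c := by simp only [Fin.le_def, hc, Fin.val_mk]; omega
      have h2' : c ≤ b := by simp only [Fin.le_def, hc, Fin.val_mk]; omega
      exact hconv a c b h1 h2' hbmem.symm
    have hadj : (pathGraph n).Adj a c := Or.inl (by
      simp only [hc, Fin.val_mk])
    have : c ∈ (cell π (π a)).filter fun x => (pathGraph n).Adj a x := by
      simp [cell, hπc, hadj]
    exact Finset.card_pos.mpr ⟨c, this⟩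

/-- At most one friend of `a` in any cell not containing `a`. -/
lemma butil_other_le_one {n k : ℕ} (π : Fin n → Fin k)
    (hconv : ∀ x y z : Fin n, x ≤ y → y ≤ z → π x = π z → π y = π x)
    (a : Fin n) (j : Fin k) (hj : π a ≠ j) :
    butil (pathGraph n) a (cell π j) ≤ 1 := by
  apply Finset.card_le_one.mpr
  intro x hx y hy
  simp only [cell, Finset.mem_filter, Finset.mem_univ, true_and] at hx hy
  obtain ⟨hxj, hxa⟩ := hx
  obtain ⟨hyj, hya⟩ := hy
  by_contra hne
  have hnev : x.val ≠ y.val := fun h => hne (Fin.ext h)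
  have hxa' : a.val + 1 = x.val ∨ x.val + 1 = a.val := hxa
  have hya' : a.val + 1 = y.val ∨ y.val + 1 = a.val := hya
  -- one of x, y is a-1 and the other is a+1; wlog handle both orders
  have key : ∀ u w : Fin n, u.val + 1 = a.val → a.val + 1 = w.val → π u = j → π w = j → False := by
    intro u w hu hw huj hwj
    have h1 : u ≤ a := by rw [Fin.le_def]; omega
    have h2 : a ≤ w := by rw [Fin.le_def]; omega
    have := hconv u a w h1 h2 (huj.trans hwj.symm)
    exact hj (this.trans huj)
  rcases hxa' with h1 | h1 <;> rcases hya' with h2 | h2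
  · exact hnev (by omega)
  · exact key y x h2 h1 hyj hxj
  · exact key x y h1 h2 hxj hyj
  · exact hnev (by omega)

/-- If `G` is a path on `n` vertices with binary utilities and `⌊n/k⌋ ≥ 2`, then a
balanced `k`-partition into `k` contiguous sub-paths exists, and every such
contiguous balanced `k`-partition is proportional and envy-free. -/
theorem stmt15 (n k : ℕ) (hk : 0 < k) (h2 : 2 ≤ n / k) :
    (∃ π : Fin n → Fin k, IsBalanced π ∧
        ∀ x y z : Fin n, x ≤ y → y ≤ z → π x = π z → π y = π x) ∧
      ∀ π : Fin n → Fin k, IsBalanced π →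
        (∀ x y z : Fin n, x ≤ y → y ≤ z → π x = π z → π y = π x) →
        IsPROP (pathGraph n) π ∧ IsEF (pathGraph n) π := by
  have hn : 0 < n := by
    rcases Nat.eq_zero_or_pos n with h | h
    · rw [h] at h2; simp [Nat.zero_div] at h2
    · exact h
  constructor
  · -- existence of a contiguous balanced partition
    refine ⟨contigPart n k hn hk, ?_, ?_⟩
    · -- balanced
      intro i
      have hcell : cell (contigPart n k hn hk) i
          = Finset.attachFin (Finset.Ico (cfun n k i.val) (cfun n k (i.val + 1)))
            (fun m hm => by
              have h1 := (Finset.mem_Ico.mp hm).2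
              have h2' : cfun n k (i.val + 1) ≤ cfun n k k := cfun_mono i.isLt
              rw [cfun_k hk] at h2'
              omega) := by
        ext x
        simp only [cell, Finset.mem_filter, Finset.mem_univ, true_and,
          Finset.mem_attachFin, Finset.mem_Ico, Fin.ext_iff]
        exact part_mem_iff hn hk x.val i.val
      rw [hcell, Finset.card_attachFin, Nat.card_Ico]
      simp only [Fintype.card_fin]
      exact cfun_bounds hk i.val
    · -- contiguous
      intro x y z hxy hyz hxz
      rw [Fin.le_def] at hxy hyz
      rw [Fin.ext_iff] at hxz ⊢
      simp only [contigPart, Fin.val_mk] at hxz ⊢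
      have m1 : x.val * k ≤ y.val * k := Nat.mul_le_mul_right k hxy
      have m2 : y.val * k ≤ z.val * k := Nat.mul_le_mul_right k hyz
      have d1 : x.val * k / n ≤ y.val * k / n := Nat.div_le_div_right m1
      have d2 : y.val * k / n ≤ z.val * k / n := Nat.div_le_div_right m2
      omega
  · -- every contiguous balanced partition is PROP and EF
    intro π hbal hconv
    have hown : ∀ a : Fin n, 1 ≤ butil (pathGraph n) a (cell π (π a)) :=
      one_le_butil_own π h2 hbal hconv
    constructor
    · -- PROP
      intro a
      rcases Nat.lt_or_ge k 2 with hk1 | hk2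
      · -- k = 1
        have hk1' : k = 1 := by omega
        subst hk1'
        have hcell : cell π (π a) = Finset.univ := by
          ext v
          simp [cell, Subsingleton.elim (π v) (π a)]
        rw [hcell, one_mul]
        rw [SimpleGraph.degree, SimpleGraph.neighborFinset_eq_filter]
        unfold butil
        exact le_refl _
      · -- k ≥ 2
        calc (pathGraph n).degree a ≤ 2 := deg_le_two a
          _ ≤ k * 1 := by omega
          _ ≤ k * butil (pathGraph n) a (cell π (π a)) :=
              Nat.mul_le_mul_left k (hown a)
    · -- EF
      intro a b
      rcases eq_or_ne (π b) (π a) with h | h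
      · rw [h]
        exact butil_mono _ _ (Finset.erase_subset _ _)
      · calc butil (pathGraph n) a ((cell π (π b)).erase b)
            ≤ butil (pathGraph n) a (cell π (π b)) :=
              butil_mono _ _ (Finset.erase_subset _ _)
          _ ≤ 1 := butil_other_le_one π hconv a (π b) (Ne.symm h)
          _ ≤ butil (pathGraph n) a (cell π (π a)) := hown a
end

section
/- Let the friendship graph have vertex cover number 1 (a star plus isolated vertices). Then for any k, a balanced k-partition that is EFX (and EF1 and MMS) always exists: place the star center together with the ⌈n/k⌉−1 highest-valued leaves (filling with isolated agents if needed) into one part and partition the rest arbitrarily. -/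
open Finset

variable {V : Type*} [Fintype V] [DecidableEq V]

/-- Cardinality of a residue fiber in `range m`. -/
lemma fiber_card (t : ℕ) (ht : 0 < t) (j : ℕ) (hj : j < t) (m : ℕ) :
    (((Finset.range m).filter fun i => i % t = j)).card
      = m / t + if j < m % t then 1 else 0 := by
  induction m with
  | zero => simp
  | succ m ih =>
    rw [Finset.range_add_one, Finset.filter_insert]
    have hq := Nat.div_add_mod m t
    have ha : m % t < t := Nat.mod_lt _ ht
    have hm1 : m + 1 = t * (m / t) + (m % t + 1) := by
      conv_lhs => rw [← hq]
      rw [Nat.add_assoc]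
    have hdiv : (m + 1) / t = if m % t + 1 = t then m / t + 1 else m / t := by
      rw [hm1, Nat.mul_add_div ht]
      split_ifs with h
      · rw [h, Nat.div_self ht]
      · rw [Nat.div_eq_of_lt (show m % t + 1 < t by omega)]
        omega
    have hmod : (m + 1) % t = if m % t + 1 = t then 0 else m % t + 1 := by
      rw [hm1, Nat.mul_add_mod]
      split_ifs with h
      · rw [h, Nat.mod_self]
      · exact Nat.mod_eq_of_lt (by omega)
    by_cases hj' : m % t = j
    · rw [if_pos hj', Finset.card_insert_of_notMem (by simp), ih, hdiv, hmod]
      split_ifs <;> omega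
    · rw [if_neg hj', ih, hdiv, hmod]
      split_ifs <;> omega

/-- Filtering `Fin m` by a predicate on values has the same cardinality as
filtering `range m`. -/
lemma fin_filter_card (M : ℕ) (p : ℕ → Prop) [DecidablePred p] :
    ((Finset.univ : Finset (Fin M)).filter (fun i => p i.val)).card
      = ((Finset.range M).filter p).card := by
  apply Finset.card_bij (fun i _ => i.val)
  · intro a ha
    simp only [Finset.mem_filter, Finset.mem_univ, true_and] at ha
    simp [Finset.mem_filter, Finset.mem_range, a.isLt, ha]
  · intro a _ b _ h
    exact Fin.val_injective h
  · intro b hb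
    simp only [Finset.mem_filter, Finset.mem_range] at hb
    exact ⟨⟨b, hb.1⟩, by simp [Finset.mem_filter, hb.2], rfl⟩

/-- If the friendship graph has vertex cover number at most 1 (vertex cover `{c}`,
i.e. a star plus isolated vertices), then for any `k` there is a balanced
`k`-partition that is simultaneously EFX, EF1 and MMS (additive utilities). -/
theorem stmt18 (G : SimpleGraph V) [DecidableRel G.Adj] (c : V)
    (hvc : ∀ x y : V, G.Adj x y → x = c ∨ y = c)
    (u : V → V → ℕ) (hu : ∀ a b : V, 0 < u a b ↔ G.Adj a b)
    (k : ℕ) (hk : 0 < k) :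
    ∃ π : V → Fin k, IsBalanced π ∧
      (∀ a b : V, ∀ d ∈ (cell π (π b)).erase b, G.Adj a d →
        autil u a (((cell π (π b)).erase b).erase d) ≤ autil u a (cell π (π a))) ∧
      (∀ a b : V, ∃ d : V,
        autil u a (((cell π (π b)).erase b).erase d) ≤ autil u a (cell π (π a))) ∧
      ∀ a : V, mmsShareA k u a ≤ autil u a (cell π (π a)) := by
  classical
  have hzero : ∀ a : V, a ≠ c → ∀ x : V, x ≠ c → u a x = 0 := by
    intro a hac x hxc
    by_contra h
    rcases hvc a x ((hu a x).mp (Nat.pos_of_ne_zero h)) with h' | h'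
    · exact hac h'
    · exact hxc h'
  have hucc : u c c = 0 := by
    by_contra h
    exact G.irrefl ((hu c c).mp (Nat.pos_of_ne_zero h))
  rcases eq_or_lt_of_le (show 1 ≤ k from hk) with hk1 | hk2
  · -- k = 1
    subst hk1
    set π : V → Fin 1 := fun _ => ⟨0, Nat.one_pos⟩ with hπ
    have hcell : ∀ i : Fin 1, cell π i = Finset.univ := by
      intro i
      ext v
      simp [cell, Subsingleton.elim (π v) i]
    have hbal : IsBalanced π := by
      intro i
      rw [hcell, Finset.card_univ]
      omega
    refine ⟨π, hbal, ?_, ?_, ?_⟩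
    · intro a b d _ _
      rw [hcell]
      exact Finset.sum_le_sum_of_subset
        (((Finset.erase_subset _ _).trans (Finset.erase_subset _ _)).trans
          (Finset.subset_univ _))
    · intro a b
      refine ⟨c, ?_⟩
      rw [hcell]
      exact Finset.sum_le_sum_of_subset
        (((Finset.erase_subset _ _).trans (Finset.erase_subset _ _)).trans
          (Finset.subset_univ _))
    · intro a
      unfold mmsShareA
      apply csSup_le
      · exact ⟨0, π, hbal, fun _ => Nat.zero_le _⟩
      rintro x ⟨π', _, hx⟩
      calc x ≤ autil u a (cell π' (π' a)) := hx _
        _ ≤ autil u a (cell π (π a)) := by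
            rw [hcell]
            exact Finset.sum_le_sum_of_subset (Finset.subset_univ _)
  · -- k ≥ 2
    have hk2' : 2 ≤ k := hk2
    set n := Fintype.card V with hn
    have hn1 : 1 ≤ n := by
      rw [hn]
      exact Fintype.card_pos_iff.mpr ⟨c⟩
    set s := (n + k - 1) / k with hs
    set L : Finset V := Finset.univ.erase c with hL
    have hLcard : L.card = n - 1 := by
      rw [hL, Finset.card_erase_of_mem (Finset.mem_univ c), Finset.card_univ]
    have hsn : s ≤ n := by
      have h1 : n + k - 1 ≤ n * k := by
        rcases n with _ | n'
        · omega
        · have h3 : n' ≤ n' * k := Nat.le_mul_of_pos_right n' hk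
          have h2 : (n' + 1) * k = n' * k + k := Nat.succ_mul n' k
          omega
      have h2 : (n + k - 1) / k ≤ n * k / k := Nat.div_le_div_right h1
      rwa [Nat.mul_div_cancel _ hk] at h2
    have hs1 : 1 ≤ s := by
      rw [hs, Nat.one_le_div_iff hk]
      omega
    -- choose the top set T₀
    have hpow : (L.powersetCard (s - 1)).Nonempty := by
      rw [Finset.powersetCard_nonempty, hLcard]
      omega
    obtain ⟨T₀, hT₀mem, hT₀max⟩ :=
      Finset.exists_max_image (L.powersetCard (s - 1)) (fun X => ∑ x ∈ X, u c x) hpow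
    rw [Finset.mem_powersetCard] at hT₀mem
    obtain ⟨hT₀L, hT₀card⟩ := hT₀mem
    have key : ∀ W : Finset V, W ⊆ L → W.card ≤ s - 1 →
        ∑ x ∈ W, u c x ≤ ∑ x ∈ T₀, u c x := by
      intro W hWL hWc
      obtain ⟨X, hWX, hXL, hXcard⟩ :=
        Finset.exists_subsuperset_card_eq hWL hWc (by omega)
      calc ∑ x ∈ W, u c x ≤ ∑ x ∈ X, u c x := Finset.sum_le_sum_of_subset hWX
        _ ≤ _ := hT₀max X (Finset.mem_powersetCard.mpr ⟨hXL, hXcard⟩)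
    have hcT₀ : c ∉ T₀ := by
      intro h
      have h2 := hT₀L h
      rw [hL, Finset.mem_erase] at h2
      exact h2.1 rfl
    set T : Finset V := insert c T₀ with hT
    have hTcard : T.card = s := by
      rw [hT, Finset.card_insert_of_notMem hcT₀, hT₀card]
      omega
    have hk1' : 0 < k - 1 := by omega
    set e := (Tᶜ : Finset V).equivFin with he
    set π : V → Fin k := fun v =>
      if h : v ∈ T then ⟨0, hk⟩
      else ⟨(e ⟨v, Finset.mem_compl.mpr h⟩).val % (k - 1) + 1,
            by have := Nat.mod_lt (e ⟨v, Finset.mem_compl.mpr h⟩).val hk1'; omega⟩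
      with hπ
    have hπT : ∀ v ∈ T, π v = ⟨0, hk⟩ := by
      intro v hv
      exact dif_pos hv
    have hπn : ∀ (v : V) (h : v ∉ T),
        (π v).val = (e ⟨v, Finset.mem_compl.mpr h⟩).val % (k - 1) + 1 := by
      intro v h
      simp only [hπ]
      rw [dif_neg h]
    have hπc : π c = ⟨0, hk⟩ := hπT c (Finset.mem_insert_self c T₀)
    have hcell0 : cell π ⟨0, hk⟩ = T := by
      ext v
      simp only [cell, Finset.mem_filter, Finset.mem_univ, true_and]
      constructor
      · intro h
        by_contra hvT
        have h1 := hπn v hvT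
        rw [h] at h1
        simp at h1
      · intro h
        exact hπT v h
    have hmemcell : ∀ (v : V) (j : Fin k), v ∈ cell π j ↔ π v = j := by
      intro v j
      simp [cell]
    -- cardinality of the other cells
    have hMval : (Tᶜ : Finset V).card = n - s := by
      rw [Finset.card_compl, hTcard, hn]
    have hcellj : ∀ j : Fin k, j ≠ ⟨0, hk⟩ →
        (cell π j).card = (Tᶜ : Finset V).card / (k - 1) + if j.val - 1 < (Tᶜ : Finset V).card % (k - 1) then 1 else 0 := by
      intro j hj
      have hjval : j.val ≠ 0 := fun h => hj (Fin.ext h)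
      have himg : cell π j =
          ((Finset.univ : Finset (Fin (Tᶜ : Finset V).card)).filter
            (fun i => i.val % (k - 1) = j.val - 1)).image (fun i => (e.symm i : V)) := by
        ext v
        simp only [cell, Finset.mem_filter, Finset.mem_univ, true_and, Finset.mem_image]
        constructor
        · intro hv
          have hvT : v ∉ T := by
            intro hvT
            rw [hπT v hvT] at hv
            exact hjval (congrArg Fin.val hv).symm
          refine ⟨e ⟨v, Finset.mem_compl.mpr hvT⟩, ?_, ?_⟩
          · have h1 := hπn v hvT
            rw [hv] at h1
            omega
          · rw [Equiv.symm_apply_apply]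
        · rintro ⟨i, hi, rfl⟩
          have h1 : (e.symm i : V) ∉ T := Finset.mem_compl.mp (e.symm i).2
          have h2 := hπn (e.symm i : V) h1
          have h3 : (⟨(e.symm i : V), Finset.mem_compl.mpr h1⟩ : {x // x ∈ (Tᶜ : Finset V)})
              = e.symm i := Subtype.ext rfl
          rw [h3, Equiv.apply_symm_apply] at h2
          apply Fin.ext
          omega
      rw [himg, Finset.card_image_of_injective _
        (fun a b hab => e.symm.injective (Subtype.coe_injective hab)),
        fin_filter_card (Tᶜ : Finset V).card (fun i => i % (k - 1) = j.val - 1),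
        fiber_card (k - 1) hk1' (j.val - 1) (by have := j.isLt; omega) (Tᶜ : Finset V).card]
    -- arithmetic facts
    have hqr := Nat.div_add_mod n k
    set q := n / k with hq
    set r := n % k with hr
    have hrk : r < k := Nat.mod_lt _ hk
    obtain ⟨A, hA⟩ : ∃ A, A = k * q := ⟨_, rfl⟩
    have hqrA : A + r = n := by rw [hA]; exact hqr
    obtain ⟨B, hB⟩ : ∃ B, B = (k - 1) * q := ⟨_, rfl⟩
    have hk1e : k - 1 + 1 = k := by omega
    have hBA : B + q = A := by
      rw [hB, hA]
      conv_rhs => rw [← hk1e]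
      rw [Nat.add_mul, Nat.one_mul]
    have hsval : s = if r = 0 then q else q + 1 := by
      have h1 : n + k - 1 = k * q + (r + k - 1) := by rw [← hA]; omega
      rw [hs, h1, Nat.mul_add_div hk]
      split_ifs with h
      · rw [h, Nat.div_eq_of_lt (show 0 + k - 1 < k by omega)]
        omega
      · have h2 : (r + k - 1) / k = 1 := by
          have hle : 1 ≤ (r + k - 1) / k := (Nat.one_le_div_iff hk).mpr (by omega)
          have hlt : (r + k - 1) / k < 2 := (Nat.div_lt_iff_lt_mul hk).mpr (by omega)
          omega
        rw [h2]
    have hr' : (if r = 0 then 0 else r - 1) < k - 1 := by split_ifs <;> omega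
    have hMeq : (Tᶜ : Finset V).card = (k - 1) * q + (if r = 0 then 0 else r - 1) := by
      rw [← hB]
      have hsq := hsval
      split_ifs at hsq ⊢ <;> omega
    have hMdiv : (Tᶜ : Finset V).card / (k - 1) = q := by
      rw [hMeq, Nat.mul_add_div hk1', Nat.div_eq_of_lt hr']
      omega
    have hMmod : (Tᶜ : Finset V).card % (k - 1) = (if r = 0 then 0 else r - 1) := by
      rw [hMeq, Nat.mul_add_mod, Nat.mod_eq_of_lt hr']
    have hbal : IsBalanced π := by
      intro i
      rw [← hn, ← hq, ← hs]
      by_cases hi : i = ⟨0, hk⟩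
      · rw [hi, hcell0, hTcard]
        refine ⟨?_, le_refl s⟩
        have hsq := hsval
        split_ifs at hsq <;> omega
      · rw [hcellj i hi, hMdiv, hMmod]
        have hsq := hsval
        split_ifs at hsq ⊢ <;> exact ⟨by omega, by omega⟩
    have hub : ∀ i : Fin k, (cell π i).card ≤ s := by
      intro i
      have h2 := (hbal i).2
      rwa [← hn, ← hs] at h2
    -- value of c's own cell
    have hRc : autil u c (cell π (π c)) = ∑ x ∈ T₀, u c x := by
      rw [hπc, hcell0, hT]
      simp only [autil]
      rw [Finset.sum_insert hcT₀, hucc, Nat.zero_add]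
    refine ⟨π, hbal, ?_, ?_, ?_⟩
    · -- EFX
      intro a b d hd hadj
      by_cases hac : a = c
      · rw [hac]
        by_cases hbc : π b = π c
        · rw [hbc]
          exact Finset.sum_le_sum_of_subset
            ((Finset.erase_subset _ _).trans (Finset.erase_subset _ _))
        · rw [hRc]
          simp only [autil]
          apply key
          · intro x hx
            have hx1 := Finset.mem_of_mem_erase (Finset.mem_of_mem_erase hx)
            have hxc : x ≠ c := by
              intro hxeq
              subst hxeq
              exact hbc ((hmemcell x (π b)).mp hx1).symm
            rw [hL, Finset.mem_erase]
            exact ⟨hxc, Finset.mem_univ x⟩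
          · have hb : b ∈ cell π (π b) := (hmemcell b (π b)).mpr rfl
            have hdmem : d ∈ (cell π (π b)).erase b := hd
            rw [Finset.card_erase_of_mem hdmem, Finset.card_erase_of_mem hb]
            have h2 := hub (π b)
            omega
      · have hdc : d = c := by
          rcases hvc a d hadj with h | h
          · exact absurd h hac
          · exact h
        rw [hdc]
        have hz : autil u a (((cell π (π b)).erase b).erase c) = 0 :=
          Finset.sum_eq_zero fun x hx =>
            hzero a hac x (Finset.ne_of_mem_erase hx)
        rw [hz]
        exact Nat.zero_le _
    · -- EF1
      intro a b
      refine ⟨c, ?_⟩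
      by_cases hac : a = c
      · rw [hac]
        by_cases hbc : π b = π c
        · rw [hbc]
          exact Finset.sum_le_sum_of_subset
            ((Finset.erase_subset _ _).trans (Finset.erase_subset _ _))
        · rw [hRc]
          simp only [autil]
          apply key
          · intro x hx
            rw [hL, Finset.mem_erase]
            exact ⟨Finset.ne_of_mem_erase hx, Finset.mem_univ x⟩
          · have hb : b ∈ cell π (π b) := (hmemcell b (π b)).mpr rfl
            calc (((cell π (π b)).erase b).erase c).card
                ≤ ((cell π (π b)).erase b).card := Finset.card_erase_le
              _ = (cell π (π b)).card - 1 := Finset.card_erase_of_mem hb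
              _ ≤ s - 1 := by have h2 := hub (π b); omega
      · have hz : autil u a (((cell π (π b)).erase b).erase c) = 0 :=
          Finset.sum_eq_zero fun x hx =>
            hzero a hac x (Finset.ne_of_mem_erase hx)
        rw [hz]
        exact Nat.zero_le _
    · -- MMS
      intro a
      unfold mmsShareA
      apply csSup_le
      · exact ⟨0, π, hbal, fun _ => Nat.zero_le _⟩
      rintro x ⟨π', hbal', hx⟩
      by_cases hac : a = c
      · rw [hac] at hx ⊢
        refine le_trans (hx (π' c)) ?_
        rw [hRc]
        have hcmem : c ∈ cell π' (π' c) := by simp [cell]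
        have hceq : autil u c (cell π' (π' c))
            = ∑ y ∈ (cell π' (π' c)).erase c, u c y := by
          rw [autil, Finset.sum_erase _ hucc]
        rw [hceq]
        apply key
        · intro y hy
          rw [hL, Finset.mem_erase]
          exact ⟨Finset.ne_of_mem_erase hy, Finset.mem_univ y⟩
        · rw [Finset.card_erase_of_mem hcmem]
          have h2 := (hbal' (π' c)).2
          rw [← hn, ← hs] at h2
          omega
      · have hnt : Nontrivial (Fin k) := Fin.nontrivial_iff_two_le.mpr hk2'
        obtain ⟨i, hi⟩ := exists_ne (π' c)
        have hz : autil u a (cell π' i) = 0 := by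
          apply Finset.sum_eq_zero
          intro y hy
          apply hzero a hac
          intro h
          subst h
          simp only [cell, Finset.mem_filter, Finset.mem_univ, true_and] at hy
          exact hi hy.symm
        have h2 := hx i
        rw [hz] at h2
        omega
end

section
/- Consider a star with center c and 2N leaves a₁,…,a_{2N} where u_c(a_i) = s_i for positive integers s_i with total sum 2B, and k = 2. Then the MMS-share of c equals B if and only if there exists a subset I ⊆ [2N] of size N with Σ_{i∈I} s_i = B (i.e., the Equitable Partition instance is a yes-instance). -/
open Finset

/-- Star with center `c` and `2N` leaves with `u_c(aᵢ) = sᵢ > 0` summing to `2B`,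
`k = 2`: the MMS-share of the center — the maximum over balanced 2-partitions of the
leaves into two parts of size `N` of the minimum part value — equals `B` iff there
is a subset `I` of size `N` with `∑_{i ∈ I} sᵢ = B`. -/
theorem stmt19 (N B : ℕ) (s : Fin (2 * N) → ℕ) (hs : ∀ i, 0 < s i)
    (hsum : ∑ i, s i = 2 * B) :
    sSup {m : ℕ | ∃ T : Finset (Fin (2 * N)), T.card = N ∧
        m ≤ ∑ i ∈ T, s i ∧ m ≤ ∑ i ∈ Tᶜ, s i} = B ↔
      ∃ I : Finset (Fin (2 * N)), I.card = N ∧ ∑ i ∈ I, s i = B := by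
  set S := {m : ℕ | ∃ T : Finset (Fin (2 * N)), T.card = N ∧
        m ≤ ∑ i ∈ T, s i ∧ m ≤ ∑ i ∈ Tᶜ, s i} with hS
  have hkey : ∀ T : Finset (Fin (2 * N)), ∑ i ∈ T, s i + ∑ i ∈ Tᶜ, s i = 2 * B := by
    intro T
    rw [Finset.sum_add_sum_compl, hsum]
  have hbdd : ∀ m ∈ S, m ≤ B := by
    rintro m ⟨T, -, h1, h2⟩
    have := hkey T
    omega
  have hne : S.Nonempty := by
    obtain ⟨T, -, hT⟩ := Finset.exists_subset_card_eq (s := (Finset.univ : Finset (Fin (2 * N)))) (n := N)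
      (by simp [Fintype.card_fin]; omega)
    exact ⟨0, T, hT, Nat.zero_le _, Nat.zero_le _⟩
  constructor
  · intro h
    have hmem : sSup S ∈ S := Nat.sSup_mem hne ⟨B, hbdd⟩
    rw [h] at hmem
    obtain ⟨T, hTcard, h1, h2⟩ := hmem
    have := hkey T
    exact ⟨T, hTcard, by omega⟩
  · rintro ⟨I, hIcard, hIsum⟩
    have hBmem : B ∈ S := by
      have := hkey I
      exact ⟨I, hIcard, by omega, by omega⟩
    exact le_antisymm (csSup_le hne hbdd) (le_csSup ⟨B, hbdd⟩ hBmem)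
end
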